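/- Let z ≡ 0, c_1 ≡ 1, c_{−1} ≡ −1 be constant functions in C([0,1]) and P = (1/3)(δ_z + δ_{c_1} + δ_{c_{−1}}). Let y ≡ 3/2 be constant and define x ∈ C([0,1]) by x(t) = 4t for t ∈ [0,1/2] and x(t) = −4t+4 for t ∈ [1/2,1]. Then min{‖y−z‖_∞, ‖y−x‖_∞} > 0, max{‖y−z‖_∞, ‖y−x‖_∞} < ‖x−z‖_∞, and yet D̄_2(y, P) < D̄_2(x, P). In particular, the average ACH depth does not satisfy the 'decreasing with respect to the deepest point' property. -/

import Mathlib

open MeasureTheory Filter Topology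
open scoped ENNReal

noncomputable section

abbrev I01 : Set ℝ := Set.Icc 0 1

abbrev CI := C(I01, ℝ)

noncomputable instance : MeasurableSpace CI := borel CI
instance : BorelSpace CI := ⟨rfl⟩

/-- The graph of a continuous function on `[0,1]`, as a subset of `ℝ²`. -/
def graph (x : CI) : Set (ℝ × ℝ) := Set.range fun t : I01 => ((t : ℝ), x t)

/-- The area (2-dimensional Lebesgue measure) of the convex hull of a set in `ℝ²`. -/
def ach (A : Set (ℝ × ℝ)) : ℝ := (volume (convexHull ℝ A)).toReal

/-- Ratio of the area of the convex hull of the graphs of a batch of curves to the area of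
the convex hull once `x` is added (`0/0 = 0` convention, as division by zero is zero). -/
def achRatio {m : ℕ} (xs : Fin m → CI) (x : CI) : ℝ :=
  ach (⋃ i, graph (xs i)) / ach ((⋃ i, graph (xs i)) ∪ graph x)

/-- The ACH depth of degree `J` of `x` w.r.t. `P`. -/
def ACHDepth (J : ℕ) (P : Measure CI) (x : CI) : ℝ :=
  ∫ xs, achRatio xs x ∂(Measure.pi fun _ : Fin J => P)

/-- The average ACH depth of degree `J`. -/
def avgACHDepth (J : ℕ) (P : Measure CI) (x : CI) : ℝ :=
  (J : ℝ)⁻¹ * ∑ j ∈ Finset.Icc 1 J, ACHDepth j P x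

/-- A curve is non-constant. -/
def Nonconstant (x : CI) : Prop := ¬ ∃ c : ℝ, ∀ t, x t = c

/-- The empirical ACH depth (`U`-statistic of degree `J`) based on the first `n` curves. -/
def empDepth (J n : ℕ) (X : ℕ → CI) (x : CI) : ℝ :=
  (n.choose J : ℝ)⁻¹ * ∑ s ∈ Finset.powersetCard J (Finset.range n),
    ach (⋃ i ∈ s, graph (X i)) / ach ((⋃ i ∈ s, graph (X i)) ∪ graph x)

/-- The average empirical ACH depth. -/
def avgEmpDepth (J n : ℕ) (X : ℕ → CI) (x : CI) : ℝ :=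
  (J : ℝ)⁻¹ * ∑ j ∈ Finset.Icc 1 J, empDepth j n X x

/-- The band delimited by a finite family of curves. -/
def band {m : ℕ} (xs : Fin m → CI) : Set (ℝ × ℝ) :=
  {p | ∃ t : I01, p.1 = (t : ℝ) ∧ (⨅ i, xs i t) ≤ p.2 ∧ p.2 ≤ ⨆ i, xs i t}
section AuxACH
open Set


/-! ### Geometry helpers -/

def reg (l p q : ℝ) : Set (ℝ × ℝ) :=
  {z | 0 ≤ z.1} ∩ {z | z.1 ≤ 1} ∩ {z | l ≤ z.2} ∩ {z | z.2 - p * z.1 ≤ q} ∩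
    {z | z.2 + p * z.1 ≤ p + q}

lemma mem_reg {l p q : ℝ} {z : ℝ × ℝ} :
    z ∈ reg l p q ↔ 0 ≤ z.1 ∧ z.1 ≤ 1 ∧ l ≤ z.2 ∧ z.2 ≤ p * z.1 + q ∧
      z.2 ≤ -p * z.1 + p + q := by
  simp only [reg, mem_inter_iff, mem_setOf_eq, and_assoc]
  constructor <;> rintro ⟨h1, h2, h3, h4, h5⟩ <;> exact ⟨h1, h2, h3, by linarith, by linarith⟩

lemma convex_reg (l p q : ℝ) : Convex ℝ (reg l p q) := by
  have l1 : IsLinearMap ℝ (fun z : ℝ × ℝ => z.1) := (LinearMap.fst ℝ ℝ ℝ).isLinear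
  have l2 : IsLinearMap ℝ (fun z : ℝ × ℝ => z.2) := (LinearMap.snd ℝ ℝ ℝ).isLinear
  have l3 : IsLinearMap ℝ (fun z : ℝ × ℝ => z.2 - p * z.1) := by
    constructor <;> intros <;> simp [Prod.smul_fst, Prod.smul_snd, smul_eq_mul] <;> ring
  have l4 : IsLinearMap ℝ (fun z : ℝ × ℝ => z.2 + p * z.1) := by
    constructor <;> intros <;> simp [Prod.smul_fst, Prod.smul_snd, smul_eq_mul] <;> ring
  exact ((((convex_halfSpace_ge l1 0).inter (convex_halfSpace_le l1 1)).inter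
    (convex_halfSpace_ge l2 l)).inter (convex_halfSpace_le l3 q)).inter
    (convex_halfSpace_le l4 (p + q))

lemma measurableSet_reg (l p q : ℝ) : MeasurableSet (reg l p q) := by
  have c1 : Continuous fun z : ℝ × ℝ => z.1 := continuous_fst
  have c2 : Continuous fun z : ℝ × ℝ => z.2 := continuous_snd
  refine ((((?_ : IsClosed _).inter ?_).inter ?_).inter ?_).inter ?_ |>.measurableSet
  · exact isClosed_le continuous_const c1
  · exact isClosed_le c1 continuous_const
  · exact isClosed_le continuous_const c2
  · exact isClosed_le (c2.sub (continuous_const.mul c1)) continuous_const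
  · exact isClosed_le (c2.add (continuous_const.mul c1)) continuous_const

lemma volume_reg {l p q : ℝ} (hp : 0 ≤ p) (hlq : l ≤ q) :
    volume (reg l p q) = ENNReal.ofReal (p / 4 + q - l) := by
  have hsl : ∀ t : ℝ, volume (Prod.mk t ⁻¹' reg l p q) =
      (Icc (0:ℝ) 1).indicator
        (fun t => ENNReal.ofReal (min (p * t + q) (-p * t + p + q) - l)) t := by
    intro t
    by_cases ht : t ∈ Icc (0:ℝ) 1
    · have he : Prod.mk t ⁻¹' reg l p q = Icc l (min (p * t + q) (-p * t + p + q)) := by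
        ext y
        simp only [mem_preimage, mem_reg, mem_Icc, le_min_iff]
        constructor
        · rintro ⟨-, -, h3, h4, h5⟩; exact ⟨h3, h4, h5⟩
        · rintro ⟨h3, h4, h5⟩; exact ⟨ht.1, ht.2, h3, h4, h5⟩
      rw [he, Real.volume_Icc, indicator_of_mem ht]
    · have he : Prod.mk t ⁻¹' reg l p q = ∅ := by
        ext y
        simp only [mem_preimage, mem_reg, mem_empty_iff_false, iff_false, not_and]
        intro h1 h2; exact absurd ⟨h1, h2⟩ ht
      rw [he, indicator_of_notMem ht]; simp
  rw [Measure.volume_eq_prod, Measure.prod_apply (measurableSet_reg l p q)]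
  simp_rw [hsl]
  rw [lintegral_indicator measurableSet_Icc]
  have hcont : Continuous fun t : ℝ => min (p * t + q) (-p * t + p + q) - l := by
    exact (((continuous_const.mul continuous_id).add continuous_const).min
      (((continuous_const.mul continuous_id).add continuous_const).add
        continuous_const)).sub continuous_const
  rw [← ofReal_integral_eq_lintegral_ofReal (hcont.integrableOn_Icc)
    ((ae_restrict_iff' measurableSet_Icc).2 (ae_of_all _ ?_))]
  · congr 1
    rw [MeasureTheory.integral_Icc_eq_integral_Ioc,
      ← intervalIntegral.integral_of_le (by norm_num : (0:ℝ) ≤ 1)]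
    have key : ∀ a b c d : ℝ, (∫ t in a..b, (c * t + d)) = c * (b^2 - a^2)/2 + d * (b - a) := by
      intro a b c d
      rw [intervalIntegral.integral_add (f := fun t => c * t) ((continuous_const.mul continuous_id').intervalIntegrable a b)
        (intervalIntegrable_const), intervalIntegral.integral_const_mul, integral_id,
        intervalIntegral.integral_const]
      simp [smul_eq_mul]; ring
    have hi1 : IntervalIntegrable (fun t : ℝ => min (p * t + q) (-p * t + p + q) - l)
        volume 0 (1/2) := hcont.intervalIntegrable _ _
    have hi2 : IntervalIntegrable (fun t : ℝ => min (p * t + q) (-p * t + p + q) - l)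
        volume (1/2) 1 := hcont.intervalIntegrable _ _
    rw [← intervalIntegral.integral_add_adjacent_intervals hi1 hi2]
    have e1 : (∫ t in (0:ℝ)..(1/2), (min (p * t + q) (-p * t + p + q) - l)) =
        ∫ t in (0:ℝ)..(1/2), (p * t + (q - l)) := by
      apply intervalIntegral.integral_congr
      intro t ht
      rw [uIcc_of_le (by norm_num : (0:ℝ) ≤ 1/2)] at ht
      have h1 : p * t + q ≤ -p * t + p + q := by
        nlinarith [mul_nonneg hp (show (0:ℝ) ≤ 1 - 2 * t by linarith [ht.2])]
      show (p * t + q) ⊓ (-p * t + p + q) - l = p * t + (q - l)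
      rw [min_eq_left h1]; ring
    have e2 : (∫ t in (1/2:ℝ)..1, (min (p * t + q) (-p * t + p + q) - l)) =
        ∫ t in (1/2:ℝ)..1, (-p * t + (p + q - l)) := by
      apply intervalIntegral.integral_congr
      intro t ht
      rw [uIcc_of_le (by norm_num : (1/2:ℝ) ≤ 1)] at ht
      have h1 : -p * t + p + q ≤ p * t + q := by
        nlinarith [mul_nonneg hp (show (0:ℝ) ≤ 2 * t - 1 by linarith [ht.1])]
      show (p * t + q) ⊓ (-p * t + p + q) - l = -p * t + (p + q - l)
      rw [min_eq_right h1]; ring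
    rw [e1, e2, key, key]; ring
  · intro t ht
    have h1 : q ≤ p * t + q := by nlinarith [ht.1]
    have h2 : q ≤ -p * t + p + q := by nlinarith [ht.2]
    simp only [Pi.zero_apply, sub_nonneg, le_min_iff]
    exact ⟨by linarith, by linarith⟩

lemma hull_eq_reg {l p q : ℝ} (hp : 0 ≤ p) {A : Set (ℝ × ℝ)}
    (hA : A ⊆ reg l p q)
    (h1 : ((0:ℝ), l) ∈ A) (h2 : ((1:ℝ), l) ∈ A)
    (h3 : ((0:ℝ), q) ∈ A) (h4 : ((1:ℝ), q) ∈ A)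
    (h5 : ((1/2:ℝ), p/2 + q) ∈ A) :
    convexHull ℝ A = reg l p q := by
  refine le_antisymm (convexHull_min hA (convex_reg l p q)) ?_
  intro z hz
  obtain ⟨hz0, hz1, hzl, hza, hzb⟩ := mem_reg.1 hz
  obtain ⟨t, y⟩ := z
  simp only at hz0 hz1 hzl hza hzb
  set m : ℝ := min (p * t + q) (-p * t + p + q) with hm
  have hym : y ≤ m := le_min hza hzb
  have hC : Convex ℝ (convexHull ℝ A) := convex_convexHull ℝ A
  have hPl : ((t, l) : ℝ × ℝ) ∈ convexHull ℝ A := by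
    have : ((t, l) : ℝ × ℝ) ∈ segment ℝ ((0:ℝ), l) ((1:ℝ), l) := by
      refine ⟨1 - t, t, by linarith, hz0, by ring, ?_⟩
      simp only [Prod.smul_mk, Prod.mk_add_mk, Prod.mk.injEq, smul_eq_mul]
      constructor <;> ring
    exact hC.segment_subset (subset_convexHull ℝ A h1) (subset_convexHull ℝ A h2) this
  have hPu : ((t, m) : ℝ × ℝ) ∈ convexHull ℝ A := by
    rcases le_total t (1/2) with ht | ht
    · have hmm : m = p * t + q := min_eq_left (by
        nlinarith [mul_nonneg hp (show (0:ℝ) ≤ 1 - 2 * t by linarith)])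
      have : ((t, m) : ℝ × ℝ) ∈ segment ℝ ((0:ℝ), q) ((1/2:ℝ), p/2 + q) := by
        refine ⟨1 - 2*t, 2*t, by linarith, by linarith, by ring, ?_⟩
        simp only [Prod.smul_mk, Prod.mk_add_mk, Prod.mk.injEq, smul_eq_mul, hmm]
        constructor <;> ring
      exact hC.segment_subset (subset_convexHull ℝ A h3) (subset_convexHull ℝ A h5) this
    · have hmm : m = -p * t + p + q := min_eq_right (by
        nlinarith [mul_nonneg hp (show (0:ℝ) ≤ 2 * t - 1 by linarith)])
      have : ((t, m) : ℝ × ℝ) ∈ segment ℝ ((1/2:ℝ), p/2 + q) ((1:ℝ), q) := by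
        refine ⟨2 - 2*t, 2*t - 1, by linarith, by linarith, by ring, ?_⟩
        simp only [Prod.smul_mk, Prod.mk_add_mk, Prod.mk.injEq, smul_eq_mul, hmm]
        constructor <;> ring
      exact hC.segment_subset (subset_convexHull ℝ A h5) (subset_convexHull ℝ A h4) this
  rcases eq_or_lt_of_le (hzl.trans hym) with h | h
  · have hy : y = l := le_antisymm (h ▸ hym) hzl
    rw [hy] at *; exact hPl
  · have : ((t, y) : ℝ × ℝ) ∈ segment ℝ ((t, l) : ℝ × ℝ) ((t, m) : ℝ × ℝ) := by
      refine ⟨1 - (y - l)/(m - l), (y - l)/(m - l), ?_, ?_, by ring, ?_⟩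
      · have : (y - l)/(m - l) ≤ 1 := by
          rw [div_le_one (by linarith)]; linarith
        linarith
      · exact div_nonneg (by linarith) (by linarith)
      · have hml : m - l ≠ 0 := by linarith
        simp only [Prod.smul_mk, Prod.mk_add_mk, Prod.mk.injEq, smul_eq_mul]
        constructor
        · ring
        · field_simp
          ring
    exact hC.segment_subset hPl hPu this

lemma ach_eq (l p q : ℝ) (hp : 0 ≤ p) (hlq : l ≤ q) {A : Set (ℝ × ℝ)}
    (hA : A ⊆ reg l p q)
    (h1 : ((0:ℝ), l) ∈ A) (h2 : ((1:ℝ), l) ∈ A)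
    (h3 : ((0:ℝ), q) ∈ A) (h4 : ((1:ℝ), q) ∈ A)
    (h5 : ((1/2:ℝ), p/2 + q) ∈ A) :
    ach A = p/4 + q - l := by
  rw [ach, hull_eq_reg hp hA h1 h2 h3 h4 h5, volume_reg hp hlq,
    ENNReal.toReal_ofReal (by linarith)]

/-! ### Graph helpers -/

lemma mem_graph_of (f : CI) {a b : ℝ} (ha : a ∈ I01) (hb : f ⟨a, ha⟩ = b) :
    ((a, b) : ℝ × ℝ) ∈ graph f :=
  ⟨⟨a, ha⟩, by show ((a:ℝ), f ⟨a, ha⟩) = (a, b); rw [hb]⟩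

lemma ach_segment (f : CI) (c : ℝ) (h : ∀ t, f t = c) : ach (graph f) = 0 := by
  have hsub : convexHull ℝ (graph f) ⊆ (univ : Set ℝ) ×ˢ ({c} : Set ℝ) := by
    refine convexHull_min ?_ (convex_univ.prod (convex_singleton c))
    rintro p ⟨t, rfl⟩
    exact ⟨mem_univ _, h t⟩
  have h0 : volume ((univ : Set ℝ) ×ˢ ({c} : Set ℝ)) = 0 := by
    rw [Measure.volume_eq_prod, Measure.prod_prod]; simp
  simp [ach, measure_mono_null hsub h0]

/-! ### Integration helpers -/

variable {α : Type*} [MeasurableSpace α] [MeasurableSingletonClass α]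

lemma integrable_dirac' (f : α → ℝ) (a : α) : Integrable f (Measure.dirac a) := by
  constructor
  · refine ⟨fun _ => f a, stronglyMeasurable_const, ?_⟩
    rw [Filter.EventuallyEq, MeasureTheory.ae_dirac_eq]
    simp
  · simp only [HasFiniteIntegral, lintegral_dirac]
    exact ENNReal.coe_lt_top

lemma integral_three_diracs (f : α → ℝ) (a b c : α) :
    ∫ x, f x ∂((1/3 : ℝ≥0∞) • (Measure.dirac a + Measure.dirac b + Measure.dirac c)) =
      (f a + f b + f c) / 3 := by
  have hd := integrable_dirac' f
  rw [integral_smul_measure, integral_add_measure ((hd a).add_measure (hd b)) (hd c),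
    integral_add_measure (hd a) (hd b), integral_dirac, integral_dirac, integral_dirac]
  rw [show ((1:ℝ≥0∞)/3).toReal = 1/3 by simp]
  simp only [smul_eq_mul]; ring

lemma integral_nine_diracs (f : α → ℝ) (a₁ a₂ a₃ a₄ a₅ a₆ a₇ a₈ a₉ : α) :
    ∫ x, f x ∂((1/9 : ℝ≥0∞) • (Measure.dirac a₁ + Measure.dirac a₂ + Measure.dirac a₃
      + Measure.dirac a₄ + Measure.dirac a₅ + Measure.dirac a₆ + Measure.dirac a₇
      + Measure.dirac a₈ + Measure.dirac a₉)) =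
      (f a₁ + f a₂ + f a₃ + f a₄ + f a₅ + f a₆ + f a₇ + f a₈ + f a₉) / 9 := by
  have hd := integrable_dirac' f
  rw [integral_smul_measure,
    integral_add_measure ((((((((hd a₁).add_measure (hd a₂)).add_measure (hd a₃)).add_measure
      (hd a₄)).add_measure (hd a₅)).add_measure (hd a₆)).add_measure (hd a₇)).add_measure
      (hd a₈)) (hd a₉),
    integral_add_measure (((((((hd a₁).add_measure (hd a₂)).add_measure (hd a₃)).add_measure
      (hd a₄)).add_measure (hd a₅)).add_measure (hd a₆)).add_measure (hd a₇)) (hd a₈),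
    integral_add_measure ((((((hd a₁).add_measure (hd a₂)).add_measure (hd a₃)).add_measure
      (hd a₄)).add_measure (hd a₅)).add_measure (hd a₆)) (hd a₇),
    integral_add_measure (((((hd a₁).add_measure (hd a₂)).add_measure (hd a₃)).add_measure
      (hd a₄)).add_measure (hd a₅)) (hd a₆),
    integral_add_measure ((((hd a₁).add_measure (hd a₂)).add_measure (hd a₃)).add_measure
      (hd a₄)) (hd a₅),
    integral_add_measure (((hd a₁).add_measure (hd a₂)).add_measure (hd a₃)) (hd a₄),
    integral_add_measure ((hd a₁).add_measure (hd a₂)) (hd a₃),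
    integral_add_measure (hd a₁) (hd a₂),
    integral_dirac, integral_dirac, integral_dirac, integral_dirac, integral_dirac,
    integral_dirac, integral_dirac, integral_dirac, integral_dirac]
  rw [show ((1:ℝ≥0∞)/9).toReal = 1/9 by simp]
  simp only [smul_eq_mul]; ring

lemma pi_one_eq (μ : Measure α) (a b c : α)
    (hμ : μ = (1/3 : ℝ≥0∞) • (Measure.dirac a + Measure.dirac b + Measure.dirac c)) :
    Measure.pi (fun _ : Fin 1 => μ) =
      (1/3 : ℝ≥0∞) • (Measure.dirac ![a] + Measure.dirac ![b] + Measure.dirac ![c]) := by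
  haveI : IsFiniteMeasure μ := by
    refine ⟨?_⟩
    rw [hμ]
    simp only [Measure.smul_apply, Measure.add_apply, measure_univ, smul_eq_mul]
    rw [show (1:ℝ≥0∞) + 1 + 1 = 3 by norm_num, one_div,
      ENNReal.inv_mul_cancel (by norm_num) (by norm_num)]
    exact ENNReal.one_lt_top
  refine Measure.pi_eq ?_
  intro s hs
  have hbox : MeasurableSet (Set.pi univ s) := MeasurableSet.univ_pi hs
  have hm : ∀ u : α, (Set.pi univ s).indicator (1 : (Fin 1 → α) → ℝ≥0∞) ![u] =
      (s 0).indicator 1 u := by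
    intro u
    have hmem : (![u] ∈ Set.pi univ s) ↔ u ∈ s 0 := by
      simp [Set.mem_univ_pi, Fin.forall_fin_one]
    by_cases h1 : u ∈ s 0 <;> simp [Set.indicator_apply, hmem, h1]
  simp only [Measure.smul_apply, Measure.add_apply, smul_eq_mul,
    Measure.dirac_apply' _ hbox, hm]
  rw [Fin.prod_univ_one, hμ]
  simp only [Measure.smul_apply, Measure.add_apply, smul_eq_mul,
    Measure.dirac_apply' _ (hs 0)]

lemma pi_two_eq (μ : Measure α) (a b c : α)
    (hμ : μ = (1/3 : ℝ≥0∞) • (Measure.dirac a + Measure.dirac b + Measure.dirac c)) :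
    Measure.pi (fun _ : Fin 2 => μ) =
      (1/9 : ℝ≥0∞) • (Measure.dirac ![a,a] + Measure.dirac ![a,b] + Measure.dirac ![a,c]
        + Measure.dirac ![b,a] + Measure.dirac ![b,b] + Measure.dirac ![b,c]
        + Measure.dirac ![c,a] + Measure.dirac ![c,b] + Measure.dirac ![c,c]) := by
  haveI : IsFiniteMeasure μ := by
    refine ⟨?_⟩
    rw [hμ]
    simp only [Measure.smul_apply, Measure.add_apply, measure_univ, smul_eq_mul]
    rw [show (1:ℝ≥0∞) + 1 + 1 = 3 by norm_num, one_div,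
      ENNReal.inv_mul_cancel (by norm_num) (by norm_num)]
    exact ENNReal.one_lt_top
  refine Measure.pi_eq ?_
  intro s hs
  have hbox : MeasurableSet (Set.pi univ s) := MeasurableSet.univ_pi hs
  have hm : ∀ u v : α, (Set.pi univ s).indicator (1 : (Fin 2 → α) → ℝ≥0∞) ![u, v] =
      (s 0).indicator 1 u * (s 1).indicator 1 v := by
    intro u v
    have hmem : (![u, v] ∈ Set.pi univ s) ↔ u ∈ s 0 ∧ v ∈ s 1 := by
      simp [Set.mem_univ_pi, Fin.forall_fin_two]
    by_cases h1 : u ∈ s 0 <;> by_cases h2 : v ∈ s 1 <;>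
      simp [Set.indicator_apply, hmem, h1, h2]
  simp only [Measure.smul_apply, Measure.add_apply, smul_eq_mul,
    Measure.dirac_apply' _ hbox, hm]
  rw [Fin.prod_univ_two, hμ]
  simp only [Measure.smul_apply, Measure.add_apply, smul_eq_mul,
    Measure.dirac_apply' _ (hs 0), Measure.dirac_apply' _ (hs 1)]
  rw [show (1/9 : ℝ≥0∞) = (1/3) * (1/3) by
    simp only [one_div]; rw [← ENNReal.mul_inv (by norm_num) (by norm_num)]; norm_num]
  ring

end AuxACH
/-- counterexample to 'decreasing w.r.t. the deepest point'. With
`P = (1/3)(δ_{0} + δ_{1} + δ_{−1})` (constant curves), `y ≡ 3/2` and `x` the triangle function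
below, one has `min(‖y−z‖, ‖y−x‖) > 0` and `max(‖y−z‖, ‖y−x‖) < ‖x−z‖` (with `z ≡ 0`),
yet `D̄₂(y,P) < D̄₂(x,P)`. -/
theorem ach_depth_not_decreasing (x : CI)
    (hx1 : ∀ s : I01, (s : ℝ) ≤ 1/2 → x s = 4 * (s : ℝ))
    (hx2 : ∀ s : I01, 1/2 ≤ (s : ℝ) → x s = -4 * (s : ℝ) + 4)
    (P : Measure CI)
    (hPdef : P = (1/3 : ℝ≥0∞) • (Measure.dirac (0 : CI)
      + Measure.dirac (ContinuousMap.const I01 (1 : ℝ))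
      + Measure.dirac (ContinuousMap.const I01 (-1 : ℝ)))) :
    0 < min ‖ContinuousMap.const I01 (3/2 : ℝ) - (0 : CI)‖
          ‖ContinuousMap.const I01 (3/2 : ℝ) - x‖ ∧
    max ‖ContinuousMap.const I01 (3/2 : ℝ) - (0 : CI)‖
        ‖ContinuousMap.const I01 (3/2 : ℝ) - x‖ < ‖x - (0 : CI)‖ ∧
    avgACHDepth 2 P (ContinuousMap.const I01 (3/2 : ℝ)) < avgACHDepth 2 P x := by
  classical
  set y : CI := ContinuousMap.const I01 (3/2 : ℝ) with hydef
  set c1 : CI := ContinuousMap.const I01 (1 : ℝ) with hc1def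
  set cm : CI := ContinuousMap.const I01 (-1 : ℝ) with hcmdef
  have h0I : (0:ℝ) ∈ I01 := by constructor <;> norm_num
  have h1I : (1:ℝ) ∈ I01 := by constructor <;> norm_num
  have hhI : (1/2:ℝ) ∈ I01 := by constructor <;> norm_num
  have hx0 : x ⟨0, h0I⟩ = 0 := by rw [hx1 _ (by norm_num)]; norm_num
  have hxone : x ⟨1, h1I⟩ = 0 := by rw [hx2 _ (by norm_num)]; norm_num
  have hxh : x ⟨1/2, hhI⟩ = 2 := by rw [hx1 _ (by norm_num)]; norm_num
  -- bounds on x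
  have hxb : ∀ t : I01, 0 ≤ x t ∧ x t ≤ 4*(t:ℝ) ∧ x t ≤ -4*(t:ℝ)+4+0 ∧
      x t ≤ 2*(t:ℝ)+1 ∧ x t ≤ -2*(t:ℝ)+2+1 ∧ x t ≤ 2 := by
    intro t
    obtain ⟨ht0, ht1⟩ := t.2
    rcases le_total ((t:ℝ)) (1/2) with h | h
    · rw [hx1 t h]
      exact ⟨by linarith, by linarith, by linarith, by linarith, by linarith, by linarith⟩
    · rw [hx2 t h]
      exact ⟨by linarith, by linarith, by linarith, by linarith, by linarith, by linarith⟩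
  -- norm facts
  have happ0 : ∀ t : I01, (y - (0:CI)) t = 3/2 := by
    intro t
    simp [hydef, ContinuousMap.sub_apply, ContinuousMap.zero_apply, ContinuousMap.const_apply]
  have happx : ∀ t : I01, (y - x) t = 3/2 - x t := by
    intro t
    simp [hydef, ContinuousMap.sub_apply, ContinuousMap.const_apply]
  have hn1u : ‖y - (0:CI)‖ ≤ 3/2 := by
    refine (ContinuousMap.norm_le _ (by norm_num)).2 ?_
    intro t
    rw [happ0 t, Real.norm_eq_abs, abs_of_nonneg (by norm_num)]
  have hn1l : (3/2:ℝ) ≤ ‖y - (0:CI)‖ := by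
    have h := ContinuousMap.norm_coe_le_norm (y - (0:CI)) ⟨0, h0I⟩
    rw [happ0 _, Real.norm_eq_abs, abs_of_nonneg (by norm_num)] at h
    exact h
  have hn2u : ‖y - x‖ ≤ 3/2 := by
    refine (ContinuousMap.norm_le _ (by norm_num)).2 ?_
    intro t
    rw [happx t, Real.norm_eq_abs]
    have h1 := (hxb t).1
    have h2 := (hxb t).2.2.2.2.2
    rw [abs_le]
    constructor <;> linarith
  have hn2l : (3/2:ℝ) ≤ ‖y - x‖ := by
    have h := ContinuousMap.norm_coe_le_norm (y - x) ⟨0, h0I⟩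
    rw [happx _, hx0, Real.norm_eq_abs, abs_of_nonneg (by norm_num)] at h
    simpa using h
  have hn3l : (2:ℝ) ≤ ‖x - (0:CI)‖ := by
    have h := ContinuousMap.norm_coe_le_norm (x - (0:CI)) ⟨1/2, hhI⟩
    rw [ContinuousMap.sub_apply, ContinuousMap.zero_apply, hxh, sub_zero,
      Real.norm_eq_abs, abs_of_nonneg (by norm_num)] at h
    exact h
  refine ⟨lt_min (by linarith) (by linarith), max_lt (by linarith) (by linarith), ?_⟩
  -- membership helpers
  have mg0 : ∀ (a : ℝ) (ha : a ∈ I01), ((a, (0:ℝ)) : ℝ × ℝ) ∈ graph (0:CI) :=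
    fun a ha => mem_graph_of _ ha rfl
  have mgc : ∀ (c a : ℝ) (ha : a ∈ I01),
      ((a, c) : ℝ × ℝ) ∈ graph (ContinuousMap.const I01 c) :=
    fun c a ha => mem_graph_of _ ha rfl
  have happc1 : ∀ t : I01, c1 t = 1 := fun t => rfl
  have happcm : ∀ t : I01, cm t = -1 := fun t => rfl
  have happy : ∀ t : I01, y t = 3/2 := fun t => rfl
  have happz : ∀ t : I01, (0:CI) t = 0 := fun t => rfl
  -- subset helpers
  have gsub : ∀ (f : CI) (c : ℝ), (∀ t, f t = c) → ∀ l p q : ℝ, l ≤ c →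
      (∀ t : ℝ, 0 ≤ t → t ≤ 1 → c ≤ p*t+q ∧ c ≤ -p*t+p+q) → graph f ⊆ reg l p q := by
    intro f c hf l p q hl hcond
    rintro z ⟨t, rfl⟩
    obtain ⟨ht0, ht1⟩ := t.2
    refine mem_reg.2 ⟨ht0, ht1, ?_, ?_, ?_⟩
    · show l ≤ f t; rw [hf t]; exact hl
    · show f t ≤ p*(t:ℝ)+q; rw [hf t]; exact (hcond t ht0 ht1).1
    · show f t ≤ -p*(t:ℝ)+p+q; rw [hf t]; exact (hcond t ht0 ht1).2
  have gxsub : ∀ l p q : ℝ, l ≤ 0 →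
      (∀ t : I01, x t ≤ p*(t:ℝ)+q ∧ x t ≤ -p*(t:ℝ)+p+q) → graph x ⊆ reg l p q := by
    intro l p q hl hcond
    rintro z ⟨t, rfl⟩
    obtain ⟨ht0, ht1⟩ := t.2
    refine mem_reg.2 ⟨ht0, ht1, ?_, (hcond t).1, (hcond t).2⟩
    have := (hxb t).1
    show l ≤ x t
    linarith
  -- the six hull areas
  have hA01 : ach (graph (0:CI) ∪ graph c1) = 1 := by
    rw [ach_eq 0 0 1 le_rfl (by norm_num)
      (Set.union_subset
        (gsub _ 0 happz 0 0 1 le_rfl (fun t h0 h1 => by constructor <;> norm_num))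
        (gsub _ 1 happc1 0 0 1 (by norm_num) (fun t h0 h1 => by constructor <;> norm_num)))
      (Set.mem_union_left _ (mg0 0 h0I)) (Set.mem_union_left _ (mg0 1 h1I))
      (Set.mem_union_right _ (mgc 1 0 h0I)) (Set.mem_union_right _ (mgc 1 1 h1I))
      (show ((1/2:ℝ), (0:ℝ)/2 + 1) ∈ _ by
        norm_num
        exact Set.mem_union_right _ (mgc 1 (1/2) hhI))]
    norm_num
  have hA0m : ach (graph (0:CI) ∪ graph cm) = 1 := by
    rw [ach_eq (-1) 0 0 le_rfl (by norm_num)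
      (Set.union_subset
        (gsub _ 0 happz (-1) 0 0 (by norm_num) (fun t h0 h1 => by constructor <;> norm_num))
        (gsub _ (-1) happcm (-1) 0 0 le_rfl (fun t h0 h1 => by constructor <;> norm_num)))
      (Set.mem_union_right _ (mgc (-1) 0 h0I)) (Set.mem_union_right _ (mgc (-1) 1 h1I))
      (Set.mem_union_left _ (mg0 0 h0I)) (Set.mem_union_left _ (mg0 1 h1I))
      (show ((1/2:ℝ), (0:ℝ)/2 + 0) ∈ _ by
        norm_num
        exact Set.mem_union_left _ (mg0 (1/2) hhI))]
    norm_num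
  have hA1m : ach (graph c1 ∪ graph cm) = 2 := by
    rw [ach_eq (-1) 0 1 le_rfl (by norm_num)
      (Set.union_subset
        (gsub _ 1 happc1 (-1) 0 1 (by norm_num) (fun t h0 h1 => by constructor <;> norm_num))
        (gsub _ (-1) happcm (-1) 0 1 le_rfl (fun t h0 h1 => by constructor <;> norm_num)))
      (Set.mem_union_right _ (mgc (-1) 0 h0I)) (Set.mem_union_right _ (mgc (-1) 1 h1I))
      (Set.mem_union_left _ (mgc 1 0 h0I)) (Set.mem_union_left _ (mgc 1 1 h1I))
      (show ((1/2:ℝ), (0:ℝ)/2 + 1) ∈ _ by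
        norm_num
        exact Set.mem_union_left _ (mgc 1 (1/2) hhI))]
    norm_num
  have hB01y : ach (graph (0:CI) ∪ graph c1 ∪ graph y) = 3/2 := by
    rw [ach_eq 0 0 (3/2) le_rfl (by norm_num)
      (Set.union_subset (Set.union_subset
        (gsub _ 0 happz 0 0 (3/2) le_rfl (fun t h0 h1 => by constructor <;> norm_num))
        (gsub _ 1 happc1 0 0 (3/2) (by norm_num) (fun t h0 h1 => by constructor <;> norm_num)))
        (gsub _ (3/2) happy 0 0 (3/2) (by norm_num) (fun t h0 h1 => by constructor <;> norm_num)))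
      (Set.mem_union_left _ (Set.mem_union_left _ (mg0 0 h0I)))
      (Set.mem_union_left _ (Set.mem_union_left _ (mg0 1 h1I)))
      (Set.mem_union_right _ (mgc (3/2) 0 h0I)) (Set.mem_union_right _ (mgc (3/2) 1 h1I))
      (show ((1/2:ℝ), (0:ℝ)/2 + 3/2) ∈ _ by
        norm_num
        exact Or.inr (mgc (3/2) (1/2) hhI))]
    norm_num
  have hB0my : ach (graph (0:CI) ∪ graph cm ∪ graph y) = 5/2 := by
    rw [ach_eq (-1) 0 (3/2) le_rfl (by norm_num)
      (Set.union_subset (Set.union_subset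
        (gsub _ 0 happz (-1) 0 (3/2) (by norm_num) (fun t h0 h1 => by constructor <;> norm_num))
        (gsub _ (-1) happcm (-1) 0 (3/2) le_rfl (fun t h0 h1 => by constructor <;> norm_num)))
        (gsub _ (3/2) happy (-1) 0 (3/2) (by norm_num) (fun t h0 h1 => by constructor <;> norm_num)))
      (Set.mem_union_left _ (Set.mem_union_right _ (mgc (-1) 0 h0I)))
      (Set.mem_union_left _ (Set.mem_union_right _ (mgc (-1) 1 h1I)))
      (Set.mem_union_right _ (mgc (3/2) 0 h0I)) (Set.mem_union_right _ (mgc (3/2) 1 h1I))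
      (show ((1/2:ℝ), (0:ℝ)/2 + 3/2) ∈ _ by
        norm_num
        exact Or.inr (mgc (3/2) (1/2) hhI))]
    norm_num
  have hB1my : ach (graph c1 ∪ graph cm ∪ graph y) = 5/2 := by
    rw [ach_eq (-1) 0 (3/2) le_rfl (by norm_num)
      (Set.union_subset (Set.union_subset
        (gsub _ 1 happc1 (-1) 0 (3/2) (by norm_num) (fun t h0 h1 => by constructor <;> norm_num))
        (gsub _ (-1) happcm (-1) 0 (3/2) le_rfl (fun t h0 h1 => by constructor <;> norm_num)))
        (gsub _ (3/2) happy (-1) 0 (3/2) (by norm_num) (fun t h0 h1 => by constructor <;> norm_num)))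
      (Set.mem_union_left _ (Set.mem_union_right _ (mgc (-1) 0 h0I)))
      (Set.mem_union_left _ (Set.mem_union_right _ (mgc (-1) 1 h1I)))
      (Set.mem_union_right _ (mgc (3/2) 0 h0I)) (Set.mem_union_right _ (mgc (3/2) 1 h1I))
      (show ((1/2:ℝ), (0:ℝ)/2 + 3/2) ∈ _ by
        norm_num
        exact Or.inr (mgc (3/2) (1/2) hhI))]
    norm_num
  have hB01x : ach (graph (0:CI) ∪ graph c1 ∪ graph x) = 3/2 := by
    rw [ach_eq 0 2 1 (by norm_num) (by norm_num)
      (Set.union_subset (Set.union_subset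
        (gsub _ 0 happz 0 2 1 le_rfl (fun t h0 h1 => ⟨by linarith, by linarith⟩))
        (gsub _ 1 happc1 0 2 1 (by norm_num) (fun t h0 h1 => ⟨by linarith, by linarith⟩)))
        (gxsub 0 2 1 le_rfl (fun t => ⟨(hxb t).2.2.2.1, by
          have := (hxb t).2.2.2.2.1; linarith⟩)))
      (Set.mem_union_left _ (Set.mem_union_left _ (mg0 0 h0I)))
      (Set.mem_union_left _ (Set.mem_union_left _ (mg0 1 h1I)))
      (Set.mem_union_left _ (Set.mem_union_right _ (mgc 1 0 h0I)))
      (Set.mem_union_left _ (Set.mem_union_right _ (mgc 1 1 h1I)))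
      (show ((1/2:ℝ), (2:ℝ)/2 + 1) ∈ _ by
        norm_num
        exact Or.inr (mem_graph_of x hhI hxh))]
    norm_num
  have hB0mx : ach (graph (0:CI) ∪ graph cm ∪ graph x) = 2 := by
    rw [ach_eq (-1) 4 0 (by norm_num) (by norm_num)
      (Set.union_subset (Set.union_subset
        (gsub _ 0 happz (-1) 4 0 (by norm_num) (fun t h0 h1 => ⟨by linarith, by linarith⟩))
        (gsub _ (-1) happcm (-1) 4 0 le_rfl (fun t h0 h1 => ⟨by linarith, by linarith⟩)))
        (gxsub (-1) 4 0 (by norm_num) (fun t => ⟨by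
          have := (hxb t).2.1; linarith, by
          have := (hxb t).2.2.1; linarith⟩)))
      (Set.mem_union_left _ (Set.mem_union_right _ (mgc (-1) 0 h0I)))
      (Set.mem_union_left _ (Set.mem_union_right _ (mgc (-1) 1 h1I)))
      (Set.mem_union_left _ (Set.mem_union_left _ (mg0 0 h0I)))
      (Set.mem_union_left _ (Set.mem_union_left _ (mg0 1 h1I)))
      (show ((1/2:ℝ), (4:ℝ)/2 + 0) ∈ _ by
        norm_num
        exact Or.inr (mem_graph_of x hhI hxh))]
    norm_num
  have hB1mx : ach (graph c1 ∪ graph cm ∪ graph x) = 5/2 := by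
    rw [ach_eq (-1) 2 1 (by norm_num) (by norm_num)
      (Set.union_subset (Set.union_subset
        (gsub _ 1 happc1 (-1) 2 1 (by norm_num) (fun t h0 h1 => ⟨by linarith, by linarith⟩))
        (gsub _ (-1) happcm (-1) 2 1 le_rfl (fun t h0 h1 => ⟨by linarith, by linarith⟩)))
        (gxsub (-1) 2 1 (by norm_num) (fun t => ⟨(hxb t).2.2.2.1, by
          have := (hxb t).2.2.2.2.1; linarith⟩)))
      (Set.mem_union_left _ (Set.mem_union_right _ (mgc (-1) 0 h0I)))
      (Set.mem_union_left _ (Set.mem_union_right _ (mgc (-1) 1 h1I)))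
      (Set.mem_union_left _ (Set.mem_union_left _ (mgc 1 0 h0I)))
      (Set.mem_union_left _ (Set.mem_union_left _ (mgc 1 1 h1I)))
      (show ((1/2:ℝ), (2:ℝ)/2 + 1) ∈ _ by
        norm_num
        exact Or.inr (mem_graph_of x hhI hxh))]
    norm_num
  -- iUnion rewriting
  have hUn2 : ∀ u v : CI, (⋃ i, graph (![u, v] i)) = graph u ∪ graph v := by
    intro u v; ext z
    simp [Set.mem_iUnion, Fin.exists_fin_two]
  have hUn1 : ∀ u : CI, (⋃ i, graph (![u] i)) = graph u := by
    intro u; ext z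
    simp [Set.mem_iUnion]
  have rdiag : ∀ (u : CI) (c : ℝ) (f : CI), (∀ t, u t = c) → achRatio ![u, u] f = 0 := by
    intro u c f hc
    simp only [achRatio, hUn2, Set.union_self]
    rw [ach_segment u c hc, zero_div]
  -- degree 1 depth vanishes
  have hD1 : ∀ f : CI, ACHDepth 1 P f = 0 := by
    intro f
    have r : ∀ (u : CI) (c : ℝ), (∀ t, u t = c) → achRatio ![u] f = 0 := by
      intro u c hc
      simp only [achRatio, hUn1]
      rw [ach_segment u c hc, zero_div]
    rw [ACHDepth, pi_one_eq P _ _ _ hPdef, integral_three_diracs,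
      r _ 0 happz, r _ 1 happc1, r _ (-1) happcm]
    norm_num
  -- the 18 ratios
  have ry01 : achRatio ![(0:CI), c1] y = 2/3 := by
    simp only [achRatio, hUn2]; rw [hA01, hB01y]; norm_num
  have ry10 : achRatio ![c1, (0:CI)] y = 2/3 := by
    simp only [achRatio, hUn2]
    rw [Set.union_comm (graph c1) (graph (0:CI)), hA01, hB01y]; norm_num
  have ry0m : achRatio ![(0:CI), cm] y = 2/5 := by
    simp only [achRatio, hUn2]; rw [hA0m, hB0my]; norm_num
  have rym0 : achRatio ![cm, (0:CI)] y = 2/5 := by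
    simp only [achRatio, hUn2]
    rw [Set.union_comm (graph cm) (graph (0:CI)), hA0m, hB0my]; norm_num
  have ry1m : achRatio ![c1, cm] y = 4/5 := by
    simp only [achRatio, hUn2]; rw [hA1m, hB1my]; norm_num
  have rym1 : achRatio ![cm, c1] y = 4/5 := by
    simp only [achRatio, hUn2]
    rw [Set.union_comm (graph cm) (graph c1), hA1m, hB1my]; norm_num
  have rx01 : achRatio ![(0:CI), c1] x = 2/3 := by
    simp only [achRatio, hUn2]; rw [hA01, hB01x]; norm_num
  have rx10 : achRatio ![c1, (0:CI)] x = 2/3 := by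
    simp only [achRatio, hUn2]
    rw [Set.union_comm (graph c1) (graph (0:CI)), hA01, hB01x]; norm_num
  have rx0m : achRatio ![(0:CI), cm] x = 1/2 := by
    simp only [achRatio, hUn2]; rw [hA0m, hB0mx]
  have rxm0 : achRatio ![cm, (0:CI)] x = 1/2 := by
    simp only [achRatio, hUn2]
    rw [Set.union_comm (graph cm) (graph (0:CI)), hA0m, hB0mx]
  have rx1m : achRatio ![c1, cm] x = 4/5 := by
    simp only [achRatio, hUn2]; rw [hA1m, hB1mx]; norm_num
  have rxm1 : achRatio ![cm, c1] x = 4/5 := by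
    simp only [achRatio, hUn2]
    rw [Set.union_comm (graph cm) (graph c1), hA1m, hB1mx]; norm_num
  -- degree 2 depths
  have hD2y : ACHDepth 2 P y = 56/135 := by
    rw [ACHDepth, pi_two_eq P _ _ _ hPdef, integral_nine_diracs,
      rdiag _ 0 _ happz, rdiag _ 1 _ happc1, rdiag _ (-1) _ happcm,
      ry01, ry0m, ry10, ry1m, rym0, rym1]
    norm_num
  have hD2x : ACHDepth 2 P x = 59/135 := by
    rw [ACHDepth, pi_two_eq P _ _ _ hPdef, integral_nine_diracs,
      rdiag _ 0 _ happz, rdiag _ 1 _ happc1, rdiag _ (-1) _ happcm,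
      rx01, rx0m, rx10, rx1m, rxm0, rxm1]
    norm_num
  have hIcc : (Finset.Icc 1 2 : Finset ℕ) = {1, 2} := by decide
  rw [avgACHDepth, avgACHDepth, hIcc, Finset.sum_pair (by norm_num : (1:ℕ) ≠ 2),
    Finset.sum_pair (by norm_num : (1:ℕ) ≠ 2), hD1 y, hD1 x, hD2y, hD2x]
  norm_num

end
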